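/- Let T1, T2 be q-commuting contractions on H with T = T1T2. With Λ*: D_{T*}-defect space → D_{T1*} ⊕ D_{T2*} the isometry sending D_{T*}h to (D_{T1*}T2*h, D_{T2*}h), P* the projection onto the first coordinate, and U* the isometry sending (D_{T1*}T2*h, D_{T2*}h) to (D_{T1*}h, D_{T2*}T1*h), the operators G1 = Λ** P*^⊥ U* Λ* and G2 = Λ** U** P* Λ* satisfy D_{T*} G1 D_{T*} = T1* − T2 T* and D_{T*} G2 D_{T*} = T2* − q T1 T*. -/

import Mathlib

open ContinuousLinearMap
open scoped InnerProductSpace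

/-- The concrete fundamental operators built from the special Andô tuple
`(𝒟_{T1*} ⊕ 𝒟_{T2*}; Λ*, P*, U*)` of `(T1*, T2*)` satisfy the fundamental equations:
`D_{T*} (Λ*^* P*^⊥ U* Λ*) D_{T*} = T1* − T2 T*` and
`D_{T*} (Λ*^* U*^* P* Λ*) D_{T*} = T2* − q T1 T*`.
(These operator equations are stated via inner products against arbitrary vectors, with
Mathlib's convention that the inner product is linear in the second variable.) -/
theorem special_Ando_fundamental_equations
    {H : Type*} [NormedAddCommGroup H] [InnerProductSpace ℂ H] [CompleteSpace H]
    (q : ℂ) (hq : ‖q‖ = 1)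
    (T1 T2 : H →L[ℂ] H) (hT1 : ‖T1‖ ≤ 1) (hT2 : ‖T2‖ ≤ 1)
    (hcomm : T1 * T2 = q • (T2 * T1))
    (Dst D1s D2s : H →L[ℂ] H)
    (hDst : Dst.IsPositive) (hD1s : D1s.IsPositive) (hD2s : D2s.IsPositive)
    (hDstsq : Dst * Dst = 1 - (T1 * T2) * adjoint (T1 * T2))
    (hD1ssq : D1s * D1s = 1 - T1 * adjoint T1)
    (hD2ssq : D2s * D2s = 1 - T2 * adjoint T2)
    (M : Submodule ℂ H) (hM : M = (LinearMap.range (Dst : H →ₗ[ℂ] H)).topologicalClosure)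
    -- the isometry Λ* : 𝒟_{T*} → 𝒟_{T1*} ⊕₂ 𝒟_{T2*}
    (Λ : M →L[ℂ] WithLp 2 (H × H))
    (hΛiso : ∀ x : M, ‖Λ x‖ = ‖x‖)
    (hΛ : ∀ (h : H) (x : M), (x : H) = Dst h →
      Λ x = (WithLp.equiv 2 (H × H)).symm (D1s (adjoint T2 h), D2s h))
    -- the projection P* onto the first coordinate
    (P : WithLp 2 (H × H) →L[ℂ] WithLp 2 (H × H))
    (hP : ∀ v : WithLp 2 (H × H),
      P v = (WithLp.equiv 2 (H × H)).symm ((WithLp.equiv 2 (H × H) v).1, 0))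
    -- the unitary U*
    (U : WithLp 2 (H × H) →L[ℂ] WithLp 2 (H × H))
    (hUuni : adjoint U ∘L U = 1 ∧ U ∘L adjoint U = 1)
    (hUact : ∀ h : H,
      U ((WithLp.equiv 2 (H × H)).symm (D1s (adjoint T2 h), D2s h))
        = (WithLp.equiv 2 (H × H)).symm (D1s h, D2s (adjoint T1 h))) :
    ∀ (h h' : H) (x x' : M), (x : H) = Dst h → (x' : H) = Dst h' →
      -- ⟨D_{T*} G1 D_{T*} h, h'⟩ = ⟨(T1* − T2 T*) h, h'⟩ with G1 = Λ*^* P*^⊥ U* Λ*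
      (⟪Λ x', U (Λ x) - P (U (Λ x))⟫_ℂ
        = ⟪(h' : H), (adjoint T1 - T2 * adjoint (T1 * T2)) h⟫_ℂ) ∧
      -- ⟨D_{T*} G2 D_{T*} h, h'⟩ = ⟨(T2* − q T1 T*) h, h'⟩ with G2 = Λ*^* U*^* P* Λ*
      (⟪U (Λ x'), P (Λ x)⟫_ℂ
        = ⟪(h' : H), (adjoint T2 - q • (T1 * adjoint (T1 * T2))) h⟫_ℂ) := by

  intro h h' x x' hx hx'
  have hΛx := hΛ h x hx
  have hΛx' := hΛ h' x' hx'
  have hD1 : adjoint D1s = D1s := by rw [← star_eq_adjoint]; exact hD1s.isSelfAdjoint.star_eq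
  have hD2 : adjoint D2s = D2s := by rw [← star_eq_adjoint]; exact hD2s.isSelfAdjoint.star_eq
  have hq1 : q * starRingEnd ℂ q = 1 := by
    have h2 : Complex.normSq q = 1 := by
      simp [Complex.normSq_eq_norm_sq, hq]
    rw [Complex.mul_conj, h2, Complex.ofReal_one]
  have hD2sq : ∀ w : H, D2s (D2s w) = w - T2 (adjoint T2 w) := by
    intro w
    have := congrArg (fun A : H →L[ℂ] H => A w) hD2ssq
    simpa using this
  have hD1sq : ∀ w : H, D1s (D1s w) = w - T1 (adjoint T1 w) := by
    intro w
    have := congrArg (fun A : H →L[ℂ] H => A w) hD1ssq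
    simpa using this
  have hadjq : adjoint T1 ∘L adjoint T2 = q • (adjoint T2 ∘L adjoint T1) := by
    have := congrArg adjoint hcomm
    rw [mul_def, mul_def, adjoint_comp] at this
    have h2 : adjoint (q • (T2 ∘L T1)) = (starRingEnd ℂ q) • (adjoint T1 ∘L adjoint T2) := by
      rw [← star_eq_adjoint, star_smul, star_eq_adjoint, adjoint_comp]; rfl
    rw [h2] at this
    -- this : adjoint T2 ∘L adjoint T1 = conj q • (adjoint T1 ∘L adjoint T2)
    have := congrArg (fun A => q • A) this
    simpa [smul_smul, hq1] using this.symm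
  constructor
  · rw [hΛx, hΛx', hUact h, hP]
    simp only [Equiv.apply_symm_apply, WithLp.prod_inner_apply, WithLp.equiv_symm_apply, WithLp.equiv_apply, WithLp.ofLp_toLp,
      WithLp.ofLp_sub, Prod.fst_sub, Prod.snd_sub, WithLp.sub_fst, WithLp.sub_snd, sub_self, sub_zero,
      inner_zero_right]
    rw [zero_add, ← hD2, adjoint_inner_left, hD2, hD2sq]
    simp [inner_sub_right, mul_def, adjoint_comp, adjoint_inner_right]
  · rw [hΛx, hΛx', hUact h', hP]
    simp only [Equiv.apply_symm_apply, WithLp.prod_inner_apply, WithLp.equiv_symm_apply, WithLp.equiv_apply, WithLp.ofLp_toLp,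
      inner_zero_right, add_zero]
    rw [← hD1, adjoint_inner_left, hD1, hD1sq]
    have key : (adjoint T2 - q • (T1 * adjoint (T1 * T2))) h
        = adjoint T2 h - T1 (adjoint T1 (adjoint T2 h)) := by
      have := congrArg (fun A : H →L[ℂ] H => T1 (A h)) hadjq
      simp only [ContinuousLinearMap.comp_apply, ContinuousLinearMap.smul_apply,
        map_smul] at this
      simp only [ContinuousLinearMap.sub_apply, ContinuousLinearMap.smul_apply,
        mul_def, ContinuousLinearMap.comp_apply, adjoint_comp, this]
    rw [key]
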